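/- arXiv:2008.11765 — 2 statements merged into one kernel-verified Lean document; each statement's English description precedes it below -/
import Mathlib

section
/- The PGN(1/2, 4) distribution has Lebesgue density f_X(x) = (x² + 1) e^{−x²/2} / (2√(2π)) for all x ∈ ℝ; equivalently, PGN(1/2, 4) is the equal mixture (1/2)·ν₁ + (1/2)·ν₂, where ν₁ is the measure with density x ↦ x² e^{−x²/2}/√(2π) and ν₂ is the standard normal distribution with density x ↦ e^{−x²/2}/√(2π). -/
open MeasureTheory Real Set
open scoped ENNReal

/-- Density of the chi-squared distribution with `k` degrees of freedom. -/
noncomputable def chiSqDensity (k : ℝ) (v : ℝ) : ℝ :=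
  if 0 < v then v ^ (k / 2 - 1) * Real.exp (-v / 2) / ((2 : ℝ) ^ (k / 2) * Real.Gamma (k / 2))
  else 0

/-- The Beta function `B(a,b) = Γ(a)Γ(b)/Γ(a+b)`. -/
noncomputable def realBeta (a b : ℝ) : ℝ := Real.Gamma a * Real.Gamma b / Real.Gamma (a + b)

/-- Density of the Beta(2μ, 2(1-μ)) distribution. -/
noncomputable def betaDensity (μ : ℝ) (u : ℝ) : ℝ :=
  if 0 < u ∧ u < 1 then
    u ^ (2 * μ - 1) * (1 - u) ^ (1 - 2 * μ) / realBeta (2 * μ) (2 * (1 - μ))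
  else 0

/-- The chi-squared distribution with `k` degrees of freedom, as a measure on ℝ. -/
noncomputable def chiSqMeasure (k : ℝ) : Measure ℝ :=
  volume.withDensity (fun v => ENNReal.ofReal (chiSqDensity k v))

/-- The Beta(2μ, 2(1-μ)) distribution, as a measure on ℝ. -/
noncomputable def betaMeasure (μ : ℝ) : Measure ℝ :=
  volume.withDensity (fun u => ENNReal.ofReal (betaDensity μ u))

/-- The polar-generalized normal distribution PGN(μ, k): the pushforward of
(chi-squared k) ⊗ (Beta(2μ, 2(1-μ))) under `(v, u) ↦ √v · cos (π u)`. -/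
noncomputable def PGN (μ k : ℝ) : Measure ℝ :=
  Measure.map (fun p : ℝ × ℝ => Real.sqrt p.1 * Real.cos (π * p.2))
    ((chiSqMeasure k).prod (betaMeasure μ))

/- ### Auxiliary lemmas -/

lemma betaMeasure_half : betaMeasure (1/2) = volume.restrict (Ioo 0 1) := by
  rw [betaMeasure, ← withDensity_indicator_one measurableSet_Ioo]
  congr 1
  ext u
  by_cases h : 0 < u ∧ u < 1
  · have h1 : (2 : ℝ) * (1/2) - 1 = 0 := by norm_num
    have h2 : (1 : ℝ) - 2 * (1/2) = 0 := by norm_num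
    have h3 : realBeta (2 * (1/2)) (2 * (1 - 1/2)) = 1 := by
      norm_num [realBeta, Real.Gamma_one]
    rw [betaDensity, if_pos h, h1, h2, h3, Real.rpow_zero, Real.rpow_zero,
      indicator_of_mem (show u ∈ Ioo (0:ℝ) 1 from h)]
    norm_num
  · rw [betaDensity, if_neg h, indicator_of_notMem (show u ∉ Ioo (0:ℝ) 1 from h)]
    simp

lemma chiSqDensity_four (v : ℝ) :
    chiSqDensity 4 v = if 0 < v then v * Real.exp (-v / 2) / 4 else 0 := by
  rw [chiSqDensity]
  have h1 : (4:ℝ)/2 - 1 = 1 := by norm_num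
  have h2 : (2:ℝ) ^ ((4:ℝ)/2) = 4 := by
    rw [show (4:ℝ)/2 = ((2:ℕ):ℝ) by norm_num, Real.rpow_natCast]
    norm_num
  have h3 : Real.Gamma ((4:ℝ)/2) = 1 := by
    rw [show (4:ℝ)/2 = 2 by norm_num, Real.Gamma_two]
  rw [h1, h2, h3, Real.rpow_one]
  norm_num

lemma chiSqMeasure_four : chiSqMeasure 4 =
    volume.withDensity (fun v => ENNReal.ofReal (if 0 < v then v * Real.exp (-v / 2) / 4 else 0)) := by
  simp_rw [chiSqMeasure, chiSqDensity_four]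

lemma lintegral_image_eq_lintegral_abs_deriv_mul' {s : Set ℝ} {f f' : ℝ → ℝ}
    (hs : MeasurableSet s) (hf' : ∀ x ∈ s, HasDerivWithinAt f (f' x) s x)
    (hf : InjOn f s) (g : ℝ → ℝ≥0∞) :
    ∫⁻ x in f '' s, g x = ∫⁻ x in s, ENNReal.ofReal |f' x| * g (f x) := by
  simpa only [ContinuousLinearMap.det_toSpanSingleton] using
    MeasureTheory.lintegral_image_eq_lintegral_abs_det_fderiv_mul volume hs
      (fun x hx => (hf' x hx).hasFDerivWithinAt) hf g

/-- Image of `(0,1)` under `u ↦ √v cos (π u)`. -/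
lemma image_cos_map (v : ℝ) (hv : 0 < v) :
    (fun u : ℝ => Real.sqrt v * Real.cos (π * u)) '' Ioo 0 1
      = Ioo (-Real.sqrt v) (Real.sqrt v) := by
  have hsv : 0 < Real.sqrt v := Real.sqrt_pos.2 hv
  ext x
  constructor
  · rintro ⟨u, ⟨hu0, hu1⟩, rfl⟩
    have hπu0 : 0 < π * u := by positivity
    have hπu1 : π * u < π := by nlinarith [Real.pi_pos]
    have hc1 : Real.cos (π * u) < 1 := by
      have := Real.strictAntiOn_cos (left_mem_Icc.2 Real.pi_pos.le)
        ⟨hπu0.le, hπu1.le⟩ hπu0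
      simpa [Real.cos_zero] using this
    have hc2 : -1 < Real.cos (π * u) := by
      have := Real.strictAntiOn_cos ⟨hπu0.le, hπu1.le⟩
        (right_mem_Icc.2 Real.pi_pos.le) hπu1
      simpa [Real.cos_pi] using this
    constructor
    · show -Real.sqrt v < Real.sqrt v * Real.cos (π * u)
      nlinarith [mul_pos hsv (by linarith : (0:ℝ) < Real.cos (π * u) + 1)]
    · show Real.sqrt v * Real.cos (π * u) < Real.sqrt v
      nlinarith [mul_pos hsv (by linarith : (0:ℝ) < 1 - Real.cos (π * u))]
  · rintro ⟨hx1, hx2⟩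
    have hb1 : -1 < x / Real.sqrt v := by
      rw [lt_div_iff₀ hsv]; nlinarith
    have hb2 : x / Real.sqrt v < 1 := by
      rw [div_lt_one hsv]; exact hx2
    refine ⟨Real.arccos (x / Real.sqrt v) / π, ⟨?_, ?_⟩, ?_⟩
    · exact div_pos (Real.arccos_pos.2 hb2) Real.pi_pos
    · rw [div_lt_one Real.pi_pos]
      exact lt_of_le_of_ne (Real.arccos_le_pi _)
        (fun h => absurd (Real.arccos_eq_pi.1 h) (by linarith))
    · show Real.sqrt v * Real.cos (π * (Real.arccos (x / Real.sqrt v) / π)) = x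
      rw [show π * (Real.arccos (x / Real.sqrt v) / π) = Real.arccos (x / Real.sqrt v) by
          field_simp,
        Real.cos_arccos hb1.le hb2.le]
      field_simp

/-- Substitution in the inner integral. -/
lemma inner_subst (v : ℝ) (hv : 0 < v) (f : ℝ → ℝ≥0∞) :
    ∫⁻ u in Ioo (0:ℝ) 1, f (Real.sqrt v * Real.cos (π * u))
      = ∫⁻ x in Ioo (-Real.sqrt v) (Real.sqrt v),
          f x * ENNReal.ofReal (1 / (π * Real.sqrt (v - x ^ 2))) := by
  have hsv : 0 < Real.sqrt v := Real.sqrt_pos.2 hv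
  have hkey : ∀ (F : ℝ≥0∞) (a : ℝ), 0 < a →
      ENNReal.ofReal a * (F * ENNReal.ofReal (1 / a)) = F := by
    intro F a ha0
    rw [show ENNReal.ofReal a * (F * ENNReal.ofReal (1/a))
        = F * (ENNReal.ofReal (1/a) * ENNReal.ofReal a) by ring,
      ← ENNReal.ofReal_mul (by positivity), one_div_mul_cancel (ne_of_gt ha0),
      ENNReal.ofReal_one, mul_one]
  have hderiv : ∀ u ∈ Ioo (0:ℝ) 1,
      HasDerivWithinAt (fun u : ℝ => Real.sqrt v * Real.cos (π * u))
        (Real.sqrt v * (-Real.sin (π * u) * π)) (Ioo 0 1) u := by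
    intro u _
    have h1 : HasDerivAt (fun u : ℝ => π * u) π u := by
      simpa using (hasDerivAt_id u).const_mul π
    have h2 : HasDerivAt (fun u : ℝ => Real.cos (π * u)) (-Real.sin (π * u) * π) u :=
      (Real.hasDerivAt_cos (π * u)).comp u h1
    exact (h2.const_mul (Real.sqrt v)).hasDerivWithinAt
  have hinj : InjOn (fun u : ℝ => Real.sqrt v * Real.cos (π * u)) (Ioo 0 1) := by
    intro a ha b hb hab
    have h1 : Real.cos (π * a) = Real.cos (π * b) := mul_left_cancel₀ (ne_of_gt hsv) hab
    have h2 : π * a = π * b := by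
      refine Real.injOn_cos ⟨by nlinarith [Real.pi_pos, ha.1], ?_⟩
        ⟨by nlinarith [Real.pi_pos, hb.1], ?_⟩ h1
      · nlinarith [ha.2, Real.pi_pos]
      · nlinarith [hb.2, Real.pi_pos]
    exact mul_left_cancel₀ Real.pi_ne_zero h2
  rw [← image_cos_map v hv, lintegral_image_eq_lintegral_abs_deriv_mul' measurableSet_Ioo
    hderiv hinj (fun x => f x * ENNReal.ofReal (1 / (π * Real.sqrt (v - x ^ 2))))]
  refine (setLIntegral_congr_fun measurableSet_Ioo (fun u hu => ?_)).symm
  obtain ⟨hu0, hu1⟩ := hu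
  have hπu0 : 0 < π * u := by positivity
  have hπu1 : π * u < π := by nlinarith [Real.pi_pos]
  have hsin : 0 < Real.sin (π * u) := Real.sin_pos_of_pos_of_lt_pi hπu0 hπu1
  have habs : |Real.sqrt v * (-Real.sin (π * u) * π)| = π * (Real.sqrt v * Real.sin (π * u)) := by
    rw [show Real.sqrt v * (-Real.sin (π * u) * π) = -(π * (Real.sqrt v * Real.sin (π * u)))
      by ring, abs_neg, abs_of_pos (by positivity)]
  have hval : v - (Real.sqrt v * Real.cos (π * u)) ^ 2
      = (Real.sqrt v * Real.sin (π * u)) ^ 2 := by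
    have hvv : Real.sqrt v ^ 2 = v := Real.sq_sqrt hv.le
    have := Real.sin_sq_add_cos_sq (π * u)
    nlinarith
  have hsqrt : Real.sqrt (v - (Real.sqrt v * Real.cos (π * u)) ^ 2)
      = Real.sqrt v * Real.sin (π * u) := by
    rw [hval, Real.sqrt_sq (by positivity)]
  show ENNReal.ofReal |Real.sqrt v * (-Real.sin (π * u) * π)|
      * (f (Real.sqrt v * Real.cos (π * u))
        * ENNReal.ofReal (1 / (π * Real.sqrt (v - (Real.sqrt v * Real.cos (π * u)) ^ 2))))
      = f (Real.sqrt v * Real.cos (π * u))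
  rw [habs, hsqrt, ← mul_assoc π]
  exact hkey _ _ (by positivity)

/-- The half-line Gaussian second moment. -/
lemma I2_value : ∫ s in Ioi (0:ℝ), s ^ 2 * Real.exp (-s ^ 2 / 2) = Real.sqrt (2 * π) / 2 := by
  have himg : (fun t : ℝ => t ^ 2 / 2) '' Ioi 0 = Ioi 0 := by
    ext y
    constructor
    · rintro ⟨t, ht, rfl⟩
      exact div_pos (pow_pos (mem_Ioi.1 ht) 2) (by norm_num)
    · intro hy
      have hy' := mem_Ioi.1 hy
      refine ⟨Real.sqrt (2 * y), Real.sqrt_pos.2 (by linarith), ?_⟩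
      show Real.sqrt (2 * y) ^ 2 / 2 = y
      rw [Real.sq_sqrt (by linarith : (0:ℝ) ≤ 2 * y)]; ring
  have hderiv : ∀ t ∈ Ioi (0:ℝ), HasDerivWithinAt (fun t : ℝ => t ^ 2 / 2) t (Ioi 0) t := by
    intro t _
    simpa using ((hasDerivAt_pow 2 t).div_const 2).hasDerivWithinAt
  have hinj : InjOn (fun t : ℝ => t ^ 2 / 2) (Ioi 0) := by
    intro a ha b hb hab
    have ha' := mem_Ioi.1 ha
    have hb' := mem_Ioi.1 hb
    have h : a ^ 2 = b ^ 2 := by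
      have : a ^ 2 / 2 = b ^ 2 / 2 := hab
      linarith
    calc a = Real.sqrt (a ^ 2) := (Real.sqrt_sq ha'.le).symm
      _ = Real.sqrt (b ^ 2) := by rw [h]
      _ = b := Real.sqrt_sq hb'.le
  have key := integral_image_eq_integral_abs_deriv_smul measurableSet_Ioi hderiv hinj
    (fun x => Real.exp (-x) * x ^ ((1:ℝ)/2))
  rw [himg] at key
  have hgamma : Real.Gamma (3/2) = Real.sqrt π / 2 := by
    rw [show (3:ℝ)/2 = 1/2 + 1 by norm_num, Real.Gamma_add_one (by norm_num),
      Real.Gamma_one_half_eq]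
    ring
  have hG : ∫ x in Ioi (0:ℝ), Real.exp (-x) * x ^ ((1:ℝ)/2) = Real.sqrt π / 2 := by
    rw [← hgamma, Real.Gamma_eq_integral (by norm_num : (0:ℝ) < 3/2)]
    norm_num
  rw [hG] at key
  have hRHS : ∫ t in Ioi (0:ℝ), |t| • (Real.exp (-(t^2/2)) * (t^2/2) ^ ((1:ℝ)/2))
      = ∫ t in Ioi (0:ℝ), (t ^ 2 * Real.exp (-t ^ 2 / 2)) / Real.sqrt 2 := by
    refine setIntegral_congr_fun measurableSet_Ioi fun t ht => ?_
    have ht0 : (0:ℝ) < t := ht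
    have h1 : (t^2/2 : ℝ) ^ ((1:ℝ)/2) = t / Real.sqrt 2 := by
      rw [← Real.sqrt_eq_rpow, Real.sqrt_div (by positivity) 2, Real.sqrt_sq ht0.le]
    rw [h1, abs_of_pos ht0, smul_eq_mul]
    rw [show -(t^2/2) = -t^2/2 by ring]
    ring
  rw [hRHS, integral_div] at key
  have hs2 : (0:ℝ) < Real.sqrt 2 := by positivity
  have hsq : Real.sqrt (2*π) = Real.sqrt 2 * Real.sqrt π := by
    rw [← Real.sqrt_mul (by norm_num : (0:ℝ) ≤ 2)]
  rw [hsq]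
  rw [eq_div_iff (ne_of_gt hs2)] at key
  nlinarith [key]

lemma I0_value : ∫ s in Ioi (0:ℝ), Real.exp (-s ^ 2 / 2) = Real.sqrt (2 * π) / 2 := by
  have := integral_gaussian_Ioi (1/2)
  simp only [show ∀ s : ℝ, -(1/2 : ℝ) * s ^ 2 = -s^2/2 from fun s => by ring] at this
  rw [this, show π / (1/2 : ℝ) = 2 * π by ring]

lemma integrable_sq_exp : Integrable (fun s : ℝ => s ^ 2 * Real.exp (-s ^ 2 / 2)) := by
  have h := integrable_rpow_mul_exp_neg_mul_sq (by norm_num : (0:ℝ) < 1/2)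
    (by norm_num : (-1:ℝ) < 2)
  refine h.congr (ae_of_all _ fun s => ?_)
  show s ^ ((2:ℕ):ℝ) * Real.exp (-(1/2) * s ^ 2) = s ^ 2 * Real.exp (-s ^ 2 / 2)
  rw [Real.rpow_natCast, show -(1/2 : ℝ) * s ^ 2 = -s^2/2 by ring]

lemma integrable_exp_sq : Integrable (fun s : ℝ => Real.exp (-s ^ 2 / 2)) := by
  have h := integrable_exp_neg_mul_sq (by norm_num : (0:ℝ) < 1/2)
  refine h.congr (ae_of_all _ fun s => ?_)
  show Real.exp (-(1/2) * s ^ 2) = Real.exp (-s ^ 2 / 2)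
  rw [show -(1/2 : ℝ) * s ^ 2 = -s^2/2 by ring]


lemma real_integral_value (x : ℝ) :
    ∫ s in Ioi (0:ℝ), (x^2+s^2) * Real.exp (-(x^2+s^2)/2) / (2*π)
      = (x ^ 2 + 1) * Real.exp (-(x ^ 2) / 2) / (2 * Real.sqrt (2 * π)) := by
  have hfun : (fun s : ℝ => (x^2+s^2) * Real.exp (-(x^2+s^2)/2) / (2*π))
      = fun s => (Real.exp (-x^2/2)/(2*π)) * (x^2 * Real.exp (-s^2/2))
        + (Real.exp (-x^2/2)/(2*π)) * (s^2 * Real.exp (-s^2/2)) := by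
    funext s
    rw [show -(x^2+s^2)/2 = -x^2/2 + -s^2/2 by ring, Real.exp_add]
    ring
  rw [hfun, integral_add (((integrable_exp_sq.const_mul _).const_mul _).integrableOn)
    ((integrable_sq_exp.const_mul _).integrableOn),
    integral_const_mul, integral_const_mul, integral_const_mul, I0_value, I2_value]
  have h2π : Real.sqrt (2*π) * Real.sqrt (2*π) = 2*π := Real.mul_self_sqrt (by positivity)
  have hπ : (0:ℝ) < π := Real.pi_pos
  have hs : (0:ℝ) < Real.sqrt (2*π) := Real.sqrt_pos.2 (by positivity)
  field_simp
  ring_nf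
  rw [Real.sq_sqrt (by positivity)]

/-- The second substitution: evaluating `K x`. -/
lemma K_value (x : ℝ) :
    ∫⁻ v in Ioi (x^2), ENNReal.ofReal (v * Real.exp (-v/2)/4)
        * ENNReal.ofReal (1 / (π * Real.sqrt (v - x^2)))
      = ENNReal.ofReal ((x ^ 2 + 1) * Real.exp (-(x ^ 2) / 2) / (2 * Real.sqrt (2 * π))) := by
  have himg : (fun s : ℝ => x^2 + s^2) '' Ioi 0 = Ioi (x^2) := by
    ext y
    constructor
    · rintro ⟨s, hs, rfl⟩
      have := mem_Ioi.1 hs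
      show x^2 < x^2 + s^2
      nlinarith
    · intro hy
      have hy' := mem_Ioi.1 hy
      refine ⟨Real.sqrt (y - x^2), Real.sqrt_pos.2 (by linarith), ?_⟩
      show x^2 + Real.sqrt (y - x^2) ^ 2 = y
      rw [Real.sq_sqrt (by linarith : (0:ℝ) ≤ y - x^2)]; ring
  have hderiv : ∀ s ∈ Ioi (0:ℝ),
      HasDerivWithinAt (fun s : ℝ => x^2 + s^2) (2*s) (Ioi 0) s := by
    intro s _
    simpa using ((hasDerivAt_pow 2 s).const_add (x^2)).hasDerivWithinAt
  have hinj : InjOn (fun s : ℝ => x^2 + s^2) (Ioi 0) := by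
    intro a ha b hb hab
    have ha' := mem_Ioi.1 ha
    have hb' := mem_Ioi.1 hb
    have h : a ^ 2 = b ^ 2 := by
      have : x^2 + a^2 = x^2 + b^2 := hab
      linarith
    calc a = Real.sqrt (a ^ 2) := (Real.sqrt_sq ha'.le).symm
      _ = Real.sqrt (b ^ 2) := by rw [h]
      _ = b := Real.sqrt_sq hb'.le
  -- combine the two ofReals on Ioi (x^2)
  have step1 : ∫⁻ v in Ioi (x^2), ENNReal.ofReal (v * Real.exp (-v/2)/4)
        * ENNReal.ofReal (1 / (π * Real.sqrt (v - x^2)))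
      = ∫⁻ v in Ioi (x^2), ENNReal.ofReal (v * Real.exp (-v/2)/4 * (1 / (π * Real.sqrt (v - x^2)))) := by
    refine setLIntegral_congr_fun measurableSet_Ioi (fun v hv => ?_)
    have hv' := mem_Ioi.1 hv
    have hv0 : 0 < v := lt_of_le_of_lt (sq_nonneg x) hv'
    rw [ENNReal.ofReal_mul (by positivity)]
  rw [step1, ← himg, lintegral_image_eq_lintegral_abs_deriv_mul' measurableSet_Ioi hderiv hinj
    (fun v => ENNReal.ofReal (v * Real.exp (-v/2)/4 * (1 / (π * Real.sqrt (v - x^2)))))]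
  have step2 : ∫⁻ s in Ioi (0:ℝ), ENNReal.ofReal |2*s|
        * ENNReal.ofReal ((x^2+s^2) * Real.exp (-(x^2+s^2)/2)/4
            * (1 / (π * Real.sqrt (x^2+s^2 - x^2))))
      = ∫⁻ s in Ioi (0:ℝ), ENNReal.ofReal ((x^2+s^2) * Real.exp (-(x^2+s^2)/2) / (2*π)) := by
    refine setLIntegral_congr_fun measurableSet_Ioi (fun s hs => ?_)
    have hs' := mem_Ioi.1 hs
    rw [← ENNReal.ofReal_mul (abs_nonneg _)]
    congr 1
    rw [show x^2+s^2-x^2 = s^2 by ring, Real.sqrt_sq hs'.le, abs_of_pos (by positivity)]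
    field_simp
    ring
  rw [step2, ← ofReal_integral_eq_lintegral_ofReal ?hint ?hnn, real_integral_value x]
  case hint =>
    have hfun : (fun s : ℝ => (x^2+s^2) * Real.exp (-(x^2+s^2)/2) / (2*π))
        = fun s => (Real.exp (-x^2/2)/(2*π)) * (x^2 * Real.exp (-s^2/2))
          + (Real.exp (-x^2/2)/(2*π)) * (s^2 * Real.exp (-s^2/2)) := by
      funext s
      rw [show -(x^2+s^2)/2 = -x^2/2 + -s^2/2 by ring, Real.exp_add]
      ring
    rw [hfun]
    exact (((integrable_exp_sq.const_mul _).const_mul _).add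
      (integrable_sq_exp.const_mul _)).integrableOn
  case hnn =>
    refine ae_of_all _ fun s => ?_
    positivity

lemma pgn_lintegral (f : ℝ → ℝ≥0∞) (hf : Measurable f) :
    ∫⁻ x, f x ∂(PGN (1/2) 4)
      = ∫⁻ x, f x
          * ENNReal.ofReal ((x ^ 2 + 1) * Real.exp (-(x ^ 2) / 2) / (2 * Real.sqrt (2 * π))) := by
  have hφ : Measurable fun p : ℝ × ℝ => Real.sqrt p.1 * Real.cos (π * p.2) := by
    fun_prop
  rw [PGN, lintegral_map hf hφ, betaMeasure_half, chiSqMeasure_four]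
  have hCmeas : Measurable fun v : ℝ =>
      ENNReal.ofReal (if 0 < v then v * Real.exp (-v / 2) / 4 else 0) := by
    refine ENNReal.measurable_ofReal.comp ?_
    exact Measurable.ite measurableSet_Ioi (by fun_prop) measurable_const
  rw [lintegral_prod (fun p : ℝ × ℝ => f (Real.sqrt p.1 * Real.cos (π * p.2)))
    ((hf.comp hφ).aemeasurable)]
  have hinner_meas : Measurable fun v : ℝ =>
      ∫⁻ u in Ioo (0:ℝ) 1, f (Real.sqrt v * Real.cos (π * u)) := by
    exact Measurable.lintegral_prod_right
      (f := fun v u => f (Real.sqrt v * Real.cos (π * u))) (hf.comp (by fun_prop))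
  rw [lintegral_withDensity_eq_lintegral_mul volume hCmeas hinner_meas]
  -- the double-integral integrand
  set G : ℝ × ℝ → ℝ≥0∞ := fun q =>
    ({q : ℝ × ℝ | q.2 ^ 2 < q.1}).indicator
      (fun q => ENNReal.ofReal (q.1 * Real.exp (-q.1 / 2) / 4)
        * (f q.2 * ENNReal.ofReal (1 / (π * Real.sqrt (q.1 - q.2 ^ 2))))) q with hGdef
  have hGmeas : Measurable G := by
    refine Measurable.indicator ?_ ?_
    · refine Measurable.mul (by fun_prop) (Measurable.mul (hf.comp measurable_snd) ?_)
      fun_prop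
    · exact measurableSet_lt (by fun_prop) measurable_fst
  have hpoint : ∀ v : ℝ,
      ENNReal.ofReal (if 0 < v then v * Real.exp (-v / 2) / 4 else 0)
        * (∫⁻ u in Ioo (0:ℝ) 1, f (Real.sqrt v * Real.cos (π * u)))
      = ∫⁻ x, G (v, x) := by
    intro v
    by_cases hv : 0 < v
    · rw [if_pos hv, inner_subst v hv f]
      have hset : Ioo (-Real.sqrt v) (Real.sqrt v) = {x : ℝ | x ^ 2 < v} := by
        ext x
        rw [mem_Ioo, mem_setOf_eq, ← abs_lt, ← sq_abs x, ← Real.lt_sqrt (abs_nonneg x)]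
      have hmeas2 : Measurable fun x : ℝ =>
          f x * ENNReal.ofReal (1 / (π * Real.sqrt (v - x ^ 2))) := by
        exact hf.mul (by fun_prop)
      rw [hset, ← lintegral_const_mul _ hmeas2,
        ← lintegral_indicator (by exact measurableSet_lt (by fun_prop) measurable_const)]
      refine lintegral_congr fun x => ?_
      simp only [hGdef, Set.indicator_apply, mem_setOf_eq]
    · rw [if_neg hv]
      simp only [ENNReal.ofReal_zero, zero_mul]
      symm
      have hGv : Measurable fun x : ℝ => G (v, x) :=
        hGmeas.comp (measurable_const.prodMk measurable_id)
      rw [lintegral_eq_zero_iff hGv]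
      refine ae_of_all _ fun x => ?_
      have : ¬ (x ^ 2 < v) := by nlinarith [sq_nonneg x]
      simp only [hGdef, Set.indicator_apply, mem_setOf_eq, if_neg this]
      rfl
  calc ∫⁻ v, (fun v : ℝ => ENNReal.ofReal (if 0 < v then v * Real.exp (-v / 2) / 4 else 0))
          v * (∫⁻ u in Ioo (0:ℝ) 1, f (Real.sqrt v * Real.cos (π * u)))
      = ∫⁻ v, ∫⁻ x, G (v, x) := lintegral_congr hpoint
    _ = ∫⁻ x, ∫⁻ v, G (v, x) := by
        exact lintegral_lintegral_swap
          ((hGmeas.comp (measurable_fst.prodMk measurable_snd)).aemeasurable)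
    _ = ∫⁻ x, f x
          * ENNReal.ofReal ((x ^ 2 + 1) * Real.exp (-(x ^ 2) / 2) / (2 * Real.sqrt (2 * π))) := by
        refine lintegral_congr fun x => ?_
        have h1 : ∀ v : ℝ, G (v, x) = (Ioi (x^2)).indicator
            (fun v => f x * (ENNReal.ofReal (v * Real.exp (-v / 2) / 4)
              * ENNReal.ofReal (1 / (π * Real.sqrt (v - x ^ 2))))) v := by
          intro v
          by_cases hv : x ^ 2 < v
          · simp only [hGdef, indicator_of_mem (show (v, x) ∈ {q : ℝ × ℝ | q.2 ^ 2 < q.1} from hv),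
              indicator_of_mem (show v ∈ Ioi (x^2) from hv)]
            ring
          · simp only [hGdef,
              indicator_of_notMem (show (v, x) ∉ {q : ℝ × ℝ | q.2 ^ 2 < q.1} from hv),
              indicator_of_notMem (show v ∉ Ioi (x^2) from hv)]
        simp_rw [h1]
        rw [lintegral_indicator measurableSet_Ioi]
        rw [lintegral_const_mul _ (by fun_prop : Measurable fun v : ℝ =>
          ENNReal.ofReal (v * Real.exp (-v / 2) / 4)
            * ENNReal.ofReal (1 / (π * Real.sqrt (v - x ^ 2))))]
        rw [K_value x]

lemma PGN_eq_withDensity : PGN (1/2) 4 = volume.withDensity (fun x : ℝ =>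
    ENNReal.ofReal ((x ^ 2 + 1) * Real.exp (-(x ^ 2) / 2) / (2 * Real.sqrt (2 * π)))) := by
  refine Measure.ext fun s hs => ?_
  rw [← lintegral_indicator_one hs, pgn_lintegral _ (measurable_one.indicator hs),
    withDensity_apply _ hs, ← lintegral_indicator hs]
  refine lintegral_congr fun x => ?_
  by_cases hx : x ∈ s <;> simp [Set.indicator_apply, hx]

theorem stmt6 :
    PGN (1/2) 4 =
      volume.withDensity (fun x : ℝ =>
        ENNReal.ofReal ((x ^ 2 + 1) * Real.exp (-(x ^ 2) / 2) / (2 * Real.sqrt (2 * π)))) ∧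
    PGN (1/2) 4 =
      (1/2 : ENNReal) • volume.withDensity (fun x : ℝ =>
          ENNReal.ofReal (x ^ 2 * Real.exp (-(x ^ 2) / 2) / Real.sqrt (2 * π))) +
      (1/2 : ENNReal) • volume.withDensity (fun x : ℝ =>
          ENNReal.ofReal (Real.exp (-(x ^ 2) / 2) / Real.sqrt (2 * π))) := by
  refine ⟨PGN_eq_withDensity, ?_⟩
  rw [PGN_eq_withDensity]
  have m1 : Measurable fun x : ℝ =>
      ENNReal.ofReal (x ^ 2 * Real.exp (-(x ^ 2) / 2) / Real.sqrt (2 * π)) := by fun_prop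
  have m2 : Measurable fun x : ℝ =>
      ENNReal.ofReal (Real.exp (-(x ^ 2) / 2) / Real.sqrt (2 * π)) := by fun_prop
  rw [← withDensity_smul _ m1, ← withDensity_smul _ m2,
    ← withDensity_add_right _ (m2.const_smul _)]
  congr 1
  funext x
  simp only [Pi.add_apply, Pi.smul_apply, smul_eq_mul]
  have h12 : (1/2 : ℝ≥0∞) = ENNReal.ofReal (1/2) := by
    rw [ENNReal.ofReal_div_of_pos (by norm_num), ENNReal.ofReal_one, ENNReal.ofReal_ofNat]
  rw [h12, ← ENNReal.ofReal_mul (by norm_num), ← ENNReal.ofReal_mul (by norm_num),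
    ← ENNReal.ofReal_add (by positivity) (by positivity)]
  congr 1
  ring
end

section
/- Fix k > 0. As μ → 0⁺ (within (0,1)), the PGN(μ,k) distribution converges weakly (in the topology of weak convergence of probability measures on ℝ) to the chi distribution χ_k with k degrees of freedom, i.e. to the measure with density x ↦ x^{k−1} e^{−x²/2} / (2^{k/2−1} Γ(k/2)) on (0,∞). As μ → 1⁻, the PGN(μ,k) distribution converges weakly to the pushforward of χ_k under x ↦ −x. -/
open MeasureTheory Real Set

/-- The chi distribution with `k` degrees of freedom: the measure on ℝ with density
`x ↦ x^(k-1) e^(-x²/2) / (2^(k/2-1) Γ(k/2))` on `(0, ∞)`. -/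
noncomputable def chiMeasure (k : ℝ) : Measure ℝ :=
  volume.withDensity (fun x => ENNReal.ofReal (
    if 0 < x then
      x ^ (k - 1) * Real.exp (-(x ^ 2) / 2) / ((2 : ℝ) ^ (k / 2 - 1) * Real.Gamma (k / 2))
    else 0))

open scoped ENNReal NNReal







lemma realBeta_pos {a b : ℝ} (ha : 0 < a) (hb : 0 < b) : 0 < realBeta a b := by
  unfold realBeta
  have := Real.Gamma_pos_of_pos ha
  have := Real.Gamma_pos_of_pos hb
  have := Real.Gamma_pos_of_pos (by linarith : (0:ℝ) < a + b)
  positivity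

lemma betaDensity_nonneg (μ u : ℝ) (hμ : μ ∈ Ioo (0:ℝ) 1) : 0 ≤ betaDensity μ u := by
  unfold betaDensity
  split
  · next h =>
    have hB := realBeta_pos (by linarith [hμ.1] : (0:ℝ) < 2*μ) (by linarith [hμ.2] : (0:ℝ) < 2*(1-μ))
    have h1 : (0:ℝ) ≤ u ^ (2*μ-1) := Real.rpow_nonneg h.1.le _
    have h2 : (0:ℝ) ≤ (1-u) ^ (1-2*μ) := Real.rpow_nonneg (by linarith [h.2]) _
    positivity
  · exact le_refl 0

lemma measurable_betaDensity (μ : ℝ) : Measurable (betaDensity μ) := by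
  unfold betaDensity
  apply Measurable.ite
  · exact (measurableSet_Ioi.inter measurableSet_Iio : MeasurableSet {u : ℝ | 0 < u ∧ u < 1})
  · fun_prop
  · fun_prop

lemma measurable_chiSqDensity (k : ℝ) : Measurable (chiSqDensity k) := by
  unfold chiSqDensity
  apply Measurable.ite measurableSet_Ioi <;> fun_prop

lemma chiSqDensity_nonneg (k v : ℝ) (hk : 0 < k) : 0 ≤ chiSqDensity k v := by
  unfold chiSqDensity
  split
  · next h =>
    have := Real.Gamma_pos_of_pos (by linarith : (0:ℝ) < k/2)
    have : (0:ℝ) ≤ v ^ (k/2-1) := Real.rpow_nonneg h.le _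
    positivity
  · exact le_refl 0

/-- The real Beta integral. -/
lemma real_betaIntegral {a b : ℝ} (ha : 0 < a) (hb : 0 < b) :
    ∫ u in (0:ℝ)..1, u ^ (a-1) * (1-u) ^ (b-1) = realBeta a b := by
  have key : Complex.betaIntegral a b = ((∫ u in (0:ℝ)..1, u ^ (a-1) * (1-u) ^ (b-1) : ℝ) : ℂ) := by
    rw [Complex.betaIntegral, ← intervalIntegral.integral_ofReal]
    apply intervalIntegral.integral_congr
    intro x hx
    rw [uIcc_of_le (by norm_num : (0:ℝ) ≤ 1)] at hx
    simp only []
    rw [Complex.ofReal_mul, Complex.ofReal_cpow hx.1, Complex.ofReal_cpow (by linarith [hx.2] : (0:ℝ) ≤ 1 - x)]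
    push_cast
    ring_nf
  have h2 := Complex.Gamma_mul_Gamma_eq_betaIntegral
    (by simpa using ha : 0 < (a:ℂ).re) (by simpa using hb : 0 < (b:ℂ).re)
  rw [key] at h2
  have h3 : ((Real.Gamma a * Real.Gamma b : ℝ) : ℂ)
      = ((Real.Gamma (a+b) * ∫ u in (0:ℝ)..1, u ^ (a-1) * (1-u) ^ (b-1) : ℝ) : ℂ) := by
    push_cast
    rw [← Complex.Gamma_ofReal, ← Complex.Gamma_ofReal]
    rw [h2]
    push_cast [← Complex.Gamma_ofReal]
    ring_nf
  have h4 := Complex.ofReal_inj.mp h3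
  have hG : Real.Gamma (a+b) ≠ 0 := (Real.Gamma_pos_of_pos (by linarith)).ne'
  unfold realBeta
  field_simp at h4 ⊢
  linarith [h4]

lemma beta_integrableOn {a b : ℝ} (ha : 0 < a) (hb : 0 < b) :
    IntegrableOn (fun u : ℝ => u ^ (a-1) * (1-u) ^ (b-1)) (Ioo (0:ℝ) 1) := by
  have hc := Complex.betaIntegral_convergent
    (by simpa using ha : 0 < (a:ℂ).re) (by simpa using hb : 0 < (b:ℂ).re)
  have hnorm := hc.norm
  rw [intervalIntegrable_iff, uIoc_of_le (by norm_num : (0:ℝ) ≤ 1)] at hnorm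
  have : IntegrableOn (fun x : ℝ => ‖(x:ℂ) ^ ((a:ℂ)-1) * (1-(x:ℂ)) ^ ((b:ℂ)-1)‖) (Ioo (0:ℝ) 1) :=
    hnorm.mono_set Ioo_subset_Ioc_self
  apply this.congr_fun _ measurableSet_Ioo
  intro x hx
  have h1 : ((x:ℝ) ^ (a-1) * (1-x) ^ (b-1) : ℝ) = ‖(x:ℂ) ^ ((a:ℂ)-1) * (1-(x:ℂ)) ^ ((b:ℂ)-1)‖ := by
    rw [show ((a:ℂ)-1) = ((a-1 : ℝ) : ℂ) by push_cast; ring,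
        show ((b:ℂ)-1) = ((b-1 : ℝ) : ℂ) by push_cast; ring,
        show (1-(x:ℂ)) = ((1-x : ℝ) : ℂ) by push_cast; ring,
        ← Complex.ofReal_cpow hx.1.le, ← Complex.ofReal_cpow (by linarith [hx.2] : (0:ℝ) ≤ 1-x),
        ← Complex.ofReal_mul, Complex.norm_real]
    have p1 : (0:ℝ) ≤ x ^ (a-1) := Real.rpow_nonneg hx.1.le _
    have p2 : (0:ℝ) ≤ (1-x) ^ (b-1) := Real.rpow_nonneg (by linarith [hx.2]) _
    rw [Real.norm_eq_abs, abs_of_nonneg (mul_nonneg p1 p2)]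
  exact h1.symm

lemma betaMeasure_isProb {μ : ℝ} (hμ : μ ∈ Ioo (0:ℝ) 1) :
    IsProbabilityMeasure (betaMeasure μ) := by
  have ha : 0 < 2*μ := by linarith [hμ.1]
  have hb : 0 < 2*(1-μ) := by linarith [hμ.2]
  constructor
  rw [betaMeasure, withDensity_apply _ MeasurableSet.univ, Measure.restrict_univ]
  have hind : (fun u => ENNReal.ofReal (betaDensity μ u))
      = (Ioo (0:ℝ) 1).indicator (fun u => ENNReal.ofReal (betaDensity μ u)) := by
    ext u
    by_cases h : u ∈ Ioo (0:ℝ) 1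
    · rw [indicator_of_mem h]
    · rw [indicator_of_notMem h, betaDensity, if_neg (by simpa [mem_Ioo] using h), ENNReal.ofReal_zero]
  have hstep : ∫⁻ u, ENNReal.ofReal (betaDensity μ u) = ∫⁻ u in Ioo (0:ℝ) 1, ENNReal.ofReal (betaDensity μ u) := by
    conv_lhs => rw [show (fun u => ENNReal.ofReal (betaDensity μ u)) = fun u => (Ioo (0:ℝ) 1).indicator (fun u => ENNReal.ofReal (betaDensity μ u)) u from by rw [← hind]]
    exact lintegral_indicator measurableSet_Ioo _
  rw [hstep]
  have heq : ∀ u ∈ Ioo (0:ℝ) 1, betaDensity μ u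
      = u ^ (2*μ-1) * (1-u) ^ (2*(1-μ)-1) / realBeta (2*μ) (2*(1-μ)) := by
    intro u hu
    rw [betaDensity, if_pos ⟨hu.1, hu.2⟩]
    ring_nf
  rw [setLIntegral_congr_fun measurableSet_Ioo (fun u hu => by rw [heq u hu])]
  have hB := realBeta_pos ha hb
  have hint : IntegrableOn (fun u : ℝ => u ^ (2*μ-1) * (1-u) ^ (2*(1-μ)-1) / realBeta (2*μ) (2*(1-μ)))
      (Ioo (0:ℝ) 1) := (beta_integrableOn ha hb).div_const _
  rw [← ofReal_integral_eq_lintegral_ofReal hint]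
  · rw [integral_div]
    have : ∫ u in Ioo (0:ℝ) 1, u ^ (2*μ-1) * (1-u) ^ (2*(1-μ)-1) = realBeta (2*μ) (2*(1-μ)) := by
      rw [← integral_Ioc_eq_integral_Ioo, ← intervalIntegral.integral_of_le (by norm_num : (0:ℝ) ≤ 1)]
      exact real_betaIntegral ha hb
    rw [this, div_self hB.ne', ENNReal.ofReal_one]
  · filter_upwards [ae_restrict_mem measurableSet_Ioo] with u hu
    have h1 : (0:ℝ) ≤ u ^ (2*μ-1) := Real.rpow_nonneg hu.1.le _
    have h2 : (0:ℝ) ≤ (1-u) ^ (2*(1-μ)-1) := Real.rpow_nonneg (by linarith [hu.2]) _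
    positivity

lemma chiSqMeasure_eq_gamma (k : ℝ) (hk : 0 < k) :
    chiSqMeasure k = ProbabilityTheory.gammaMeasure (k/2) (1/2) := by
  rw [chiSqMeasure, ProbabilityTheory.gammaMeasure]
  apply withDensity_congr_ae
  filter_upwards [compl_mem_ae_iff.mpr (volume_singleton (a := (0:ℝ)))] with v hv
  have hv0 : v ≠ 0 := by simpa using hv
  rw [ProbabilityTheory.gammaPDF_eq, chiSqDensity]
  rcases lt_or_gt_of_ne hv0 with h | h
  · rw [if_neg (by linarith), if_neg (by linarith)]
  · rw [if_pos h, if_pos h.le]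
    congr 1
    rw [Real.div_rpow (by norm_num) (by norm_num : (0:ℝ) ≤ 2), Real.one_rpow]
    field_simp

lemma chiSqMeasure_isProb (k : ℝ) (hk : 0 < k) : IsProbabilityMeasure (chiSqMeasure k) := by
  rw [chiSqMeasure_eq_gamma k hk]
  exact ProbabilityTheory.isProbabilityMeasure_gammaMeasure (by linarith) (by norm_num)


lemma integral_withDensity_ofReal {d : ℝ → ℝ} (hd : Measurable d) (hd0 : ∀ x, 0 ≤ d x) (g : ℝ → ℝ) :
    ∫ x, g x ∂(volume.withDensity (fun x => ENNReal.ofReal (d x))) = ∫ x, d x * g x := by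
  have h1 : (fun x => ENNReal.ofReal (d x)) = (fun x => ((fun x => (d x).toNNReal) x : ℝ≥0∞)) := rfl
  rw [h1, integral_withDensity_eq_integral_smul (by fun_prop) g]
  congr 1
  ext x
  rw [NNReal.smul_def, Real.coe_toNNReal _ (hd0 x), smul_eq_mul]

lemma integral_chiMeasure (k : ℝ) (hk : 0 < k) (f : ℝ → ℝ) :
    ∫ x, f x ∂chiMeasure k = ∫ v, f (Real.sqrt v) ∂chiSqMeasure k := by
  set cd : ℝ → ℝ := fun x => if 0 < x then
      x ^ (k - 1) * Real.exp (-(x ^ 2) / 2) / ((2 : ℝ) ^ (k / 2 - 1) * Real.Gamma (k / 2))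
    else 0 with hcd
  have hG := Real.Gamma_pos_of_pos (by linarith : (0:ℝ) < k/2)
  have hcdm : Measurable cd := by
    apply Measurable.ite measurableSet_Ioi <;> fun_prop
  have hcd0 : ∀ x, 0 ≤ cd x := by
    intro x
    simp only [hcd]
    split
    · next h =>
      have : (0:ℝ) ≤ x ^ (k-1) := Real.rpow_nonneg h.le _
      positivity
    · exact le_refl 0
  have lhs1 : ∫ x, f x ∂chiMeasure k = ∫ x in Ioi (0:ℝ), cd x * f x := by
    rw [chiMeasure, integral_withDensity_ofReal hcdm hcd0 f, ← integral_indicator measurableSet_Ioi]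
    congr 1
    ext x
    by_cases h : x ∈ Ioi (0:ℝ)
    · rw [indicator_of_mem h]
    · rw [indicator_of_notMem h]
      simp only [hcd]
      rw [if_neg (not_lt.mpr (by simpa using h)), zero_mul]
  have rhs1 : ∫ v, f (Real.sqrt v) ∂chiSqMeasure k
      = ∫ v in Ioi (0:ℝ), chiSqDensity k v * f (Real.sqrt v) := by
    rw [chiSqMeasure, integral_withDensity_ofReal (measurable_chiSqDensity k)
      (fun v => chiSqDensity_nonneg k v hk) (fun v => f (Real.sqrt v)),
      ← integral_indicator measurableSet_Ioi]
    congr 1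
    ext v
    by_cases h : v ∈ Ioi (0:ℝ)
    · rw [indicator_of_mem h]
    · rw [indicator_of_notMem h, chiSqDensity,
        if_neg (not_lt.mpr (by simpa using h)), zero_mul]
  rw [lhs1, rhs1]
  rw [← integral_comp_rpow_Ioi_of_pos (g := fun x => cd x * f x) (by norm_num : (0:ℝ) < 1/2)]
  apply setIntegral_congr_fun measurableSet_Ioi
  intro v hv
  have hv0 : (0:ℝ) < v := hv
  have hs : Real.sqrt v = v ^ ((1:ℝ)/2) := Real.sqrt_eq_rpow v
  have hvs : (0:ℝ) < v ^ ((1:ℝ)/2) := Real.rpow_pos_of_pos hv0 _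
  simp only [smul_eq_mul, hcd, chiSqDensity, if_pos hvs, if_pos hv0]
  rw [← hs]
  have h1 : (Real.sqrt v) ^ (k-1) = v ^ ((k-1)/2) := by
    rw [hs, ← Real.rpow_mul hv0.le]
    congr 1
    ring
  have h2 : (Real.sqrt v) ^ (2:ℕ) = v := Real.sq_sqrt hv0.le
  rw [h1, h2]
  rw [show (2:ℝ) ^ (k/2) = 2 ^ (k/2-1) * 2 from by
    rw [← Real.rpow_add_one (by norm_num : (2:ℝ) ≠ 0) (k/2-1)]; ring_nf]
  have hpow : v ^ ((1:ℝ)/2-1) * v ^ ((k-1)/2) = v ^ (k/2-1) := by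
    rw [← Real.rpow_add hv0]
    congr 1
    ring
  rw [← hpow]
  have h2p : (0:ℝ) < (2:ℝ) ^ (k/2-1) := Real.rpow_pos_of_pos (by norm_num) _
  field_simp

open Filter Topology

lemma gamma_continuousAt {x : ℝ} (hx : 0 < x) : ContinuousAt Real.Gamma x :=
  (Real.differentiableAt_Gamma (fun m => by
    have : (0:ℝ) ≤ m := Nat.cast_nonneg m
    intro h; rw [h] at hx; linarith)).continuousAt

lemma realBetaInv_tendsto_zero_at0 :
    Tendsto (fun μ : ℝ => (realBeta (2*μ) (2*(1-μ)))⁻¹) (nhdsWithin 0 (Ioo (0:ℝ) 1)) (nhds 0) := by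
  have hcong : ∀ μ ∈ Ioo (0:ℝ) 1, (realBeta (2*μ) (2*(1-μ)))⁻¹
      = Real.Gamma (2*μ + 2*(1-μ)) * (2*μ) / (Real.Gamma (2*μ+1) * Real.Gamma (2*(1-μ))) := by
    intro μ hμ
    have ha : (0:ℝ) < 2*μ := by linarith [hμ.1]
    have hb : (0:ℝ) < 2*(1-μ) := by linarith [hμ.2]
    have hGa := Real.Gamma_pos_of_pos ha
    have hGb := Real.Gamma_pos_of_pos hb
    have hG1 := Real.Gamma_pos_of_pos (by linarith : (0:ℝ) < 2*μ+1)
    have hμ0 : μ ≠ 0 := by linarith [hμ.1]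
    rw [realBeta, Real.Gamma_add_one ha.ne']
    field_simp
  have hlim : Tendsto (fun μ : ℝ => Real.Gamma (2*μ + 2*(1-μ)) * (2*μ)
      / (Real.Gamma (2*μ+1) * Real.Gamma (2*(1-μ)))) (nhdsWithin 0 (Ioo (0:ℝ) 1)) (nhds 0) := by
    have t1 : Tendsto (fun μ : ℝ => Real.Gamma (2*μ + 2*(1-μ))) (nhds (0:ℝ)) (nhds (Real.Gamma 2)) :=
      (gamma_continuousAt two_pos).tendsto.comp
        ((by fun_prop : Continuous fun μ : ℝ => 2*μ+2*(1-μ)).tendsto' 0 2 (by norm_num))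
    have t2 : Tendsto (fun μ : ℝ => 2*μ) (nhds (0:ℝ)) (nhds 0) :=
      (by fun_prop : Continuous fun μ : ℝ => 2*μ).tendsto' 0 0 (by norm_num)
    have t3 : Tendsto (fun μ : ℝ => Real.Gamma (2*μ+1)) (nhds (0:ℝ)) (nhds (Real.Gamma 1)) :=
      (gamma_continuousAt one_pos).tendsto.comp
        ((by fun_prop : Continuous fun μ : ℝ => 2*μ+1).tendsto' 0 1 (by norm_num))
    have t4 : Tendsto (fun μ : ℝ => Real.Gamma (2*(1-μ))) (nhds (0:ℝ)) (nhds (Real.Gamma 2)) :=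
      (gamma_continuousAt two_pos).tendsto.comp
        ((by fun_prop : Continuous fun μ : ℝ => 2*(1-μ)).tendsto' 0 2 (by norm_num))
    have h := (t1.mul t2).div (t3.mul t4)
      (by rw [Real.Gamma_one, Real.Gamma_two]; norm_num)
    have h' := h.mono_left (nhdsWithin_le_nhds (s := Ioo (0:ℝ) 1))
    simpa [Real.Gamma_one, Real.Gamma_two, Pi.div_def] using h'
  exact hlim.congr' (by filter_upwards [self_mem_nhdsWithin] with μ hμ using (hcong μ hμ).symm)

lemma realBetaInv_tendsto_zero_at1 :
    Tendsto (fun μ : ℝ => (realBeta (2*μ) (2*(1-μ)))⁻¹) (nhdsWithin 1 (Ioo (0:ℝ) 1)) (nhds 0) := by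
  have hcong : ∀ μ ∈ Ioo (0:ℝ) 1, (realBeta (2*μ) (2*(1-μ)))⁻¹
      = Real.Gamma (2*μ + 2*(1-μ)) * (2*(1-μ)) / (Real.Gamma (2*μ) * Real.Gamma (2*(1-μ)+1)) := by
    intro μ hμ
    have ha : (0:ℝ) < 2*μ := by linarith [hμ.1]
    have hb : (0:ℝ) < 2*(1-μ) := by linarith [hμ.2]
    have hGa := Real.Gamma_pos_of_pos ha
    have hGb := Real.Gamma_pos_of_pos hb
    have hG1 := Real.Gamma_pos_of_pos (by linarith : (0:ℝ) < 2*(1-μ)+1)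
    have hμ1 : 1 - μ ≠ 0 := by linarith [hμ.2]
    rw [realBeta, Real.Gamma_add_one hb.ne']
    field_simp
  have hlim : Tendsto (fun μ : ℝ => Real.Gamma (2*μ + 2*(1-μ)) * (2*(1-μ))
      / (Real.Gamma (2*μ) * Real.Gamma (2*(1-μ)+1))) (nhdsWithin 1 (Ioo (0:ℝ) 1)) (nhds 0) := by
    have t1 : Tendsto (fun μ : ℝ => Real.Gamma (2*μ + 2*(1-μ))) (nhds (1:ℝ)) (nhds (Real.Gamma 2)) :=
      (gamma_continuousAt two_pos).tendsto.comp
        ((by fun_prop : Continuous fun μ : ℝ => 2*μ+2*(1-μ)).tendsto' 1 2 (by norm_num))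
    have t2 : Tendsto (fun μ : ℝ => 2*(1-μ)) (nhds (1:ℝ)) (nhds 0) :=
      (by fun_prop : Continuous fun μ : ℝ => 2*(1-μ)).tendsto' 1 0 (by norm_num)
    have t3 : Tendsto (fun μ : ℝ => Real.Gamma (2*μ)) (nhds (1:ℝ)) (nhds (Real.Gamma 2)) :=
      (gamma_continuousAt two_pos).tendsto.comp
        ((by fun_prop : Continuous fun μ : ℝ => 2*μ).tendsto' 1 2 (by norm_num))
    have t4 : Tendsto (fun μ : ℝ => Real.Gamma (2*(1-μ)+1)) (nhds (1:ℝ)) (nhds (Real.Gamma 1)) :=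
      (gamma_continuousAt one_pos).tendsto.comp
        ((by fun_prop : Continuous fun μ : ℝ => 2*(1-μ)+1).tendsto' 1 1 (by norm_num))
    have h := (t1.mul t2).div (t3.mul t4)
      (by rw [Real.Gamma_one, Real.Gamma_two]; norm_num)
    have h' := h.mono_left (nhdsWithin_le_nhds (s := Ioo (0:ℝ) 1))
    simpa [Real.Gamma_one, Real.Gamma_two, Pi.div_def] using h'
  exact hlim.congr' (by filter_upwards [self_mem_nhdsWithin] with μ hμ using (hcong μ hμ).symm)

lemma betaMeasure_tail_at0 {t : ℝ} (ht : t ∈ Ioo (0:ℝ) 1) :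
    Tendsto (fun μ : ℝ => betaMeasure μ (Ici t)) (nhdsWithin 0 (Ioo (0:ℝ) 1)) (nhds 0) := by
  have hup : Tendsto (fun μ : ℝ => ENNReal.ofReal (t⁻¹ * (realBeta (2*μ) (2*(1-μ)))⁻¹))
      (nhdsWithin 0 (Ioo (0:ℝ) 1)) (nhds 0) := by
    have h := realBetaInv_tendsto_zero_at0.const_mul t⁻¹
    rw [mul_zero] at h
    have := (ENNReal.continuous_ofReal.tendsto 0).comp h
    simpa [Function.comp_def] using this
  apply tendsto_of_tendsto_of_tendsto_of_le_of_le' tendsto_const_nhds hup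
  · exact Filter.Eventually.of_forall (fun μ => zero_le)
  · have hhalf : ∀ᶠ μ : ℝ in nhdsWithin 0 (Ioo (0:ℝ) 1), μ < 1/2 :=
      Filter.Eventually.filter_mono nhdsWithin_le_nhds
        (Filter.Tendsto.eventually_lt_const (by norm_num) tendsto_id)
    filter_upwards [self_mem_nhdsWithin, hhalf] with μ hμ hμ2
    set B := realBeta (2*μ) (2*(1-μ)) with hBdef
    have hB : 0 < B := realBeta_pos (by linarith [hμ.1]) (by linarith [hμ.2])
    set c : ℝ≥0∞ := ENNReal.ofReal (t⁻¹ * B⁻¹) with hc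
    rw [betaMeasure, withDensity_apply _ measurableSet_Ici]
    calc ∫⁻ u in Ici t, ENNReal.ofReal (betaDensity μ u) ∂volume
        ≤ ∫⁻ u in Ici t, (Ico t 1).indicator (fun _ => c) u ∂volume := by
          apply setLIntegral_mono (measurable_const.indicator measurableSet_Ico)
          intro u hu
          by_cases h1 : u < 1
          · rw [indicator_of_mem (show u ∈ Ico t 1 from ⟨hu, h1⟩)]
            apply ENNReal.ofReal_le_ofReal
            have hu0 : 0 < u := lt_of_lt_of_le ht.1 hu
            rw [betaDensity, if_pos (And.intro hu0 h1), ← hBdef]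
            rw [div_eq_mul_inv]
            apply mul_le_mul_of_nonneg_right _ (by positivity)
            have e1 : u ^ (2*μ-1) ≤ t ^ (2*μ-1) :=
              Real.rpow_le_rpow_of_nonpos ht.1 hu (by linarith)
            have e2 : t ^ (2*μ-1) ≤ t⁻¹ := by
              rw [← Real.rpow_neg_one t]
              exact Real.rpow_le_rpow_of_exponent_ge ht.1 ht.2.le (by linarith [hμ.1])
            have e3 : (1-u) ^ (1-2*μ) ≤ 1 :=
              Real.rpow_le_one (by linarith) (by linarith [hu0]) (by linarith)
            calc u ^ (2*μ-1) * (1-u) ^ (1-2*μ)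
                ≤ u ^ (2*μ-1) * 1 := by
                  apply mul_le_mul_of_nonneg_left e3 (Real.rpow_nonneg (by linarith [hu0]) _)
              _ = u ^ (2*μ-1) := mul_one _
              _ ≤ t ^ (2*μ-1) := e1
              _ ≤ t⁻¹ := e2
          · rw [betaDensity, if_neg (by push_neg; intro _; linarith), ENNReal.ofReal_zero]
            exact zero_le
      _ ≤ ∫⁻ u, (Ico t 1).indicator (fun _ => c) u ∂volume := setLIntegral_le_lintegral _ _
      _ = c * volume (Ico t 1) := by
          rw [lintegral_indicator measurableSet_Ico, setLIntegral_const]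
      _ ≤ c * 1 := by
          apply mul_le_mul_right
          rw [Real.volume_Ico]
          exact ENNReal.ofReal_le_one.mpr (by linarith [ht.1])
      _ = c := mul_one c

lemma betaMeasure_tail_at1 {t : ℝ} (ht : t ∈ Ioo (0:ℝ) 1) :
    Tendsto (fun μ : ℝ => betaMeasure μ (Iic t)) (nhdsWithin 1 (Ioo (0:ℝ) 1)) (nhds 0) := by
  have hup : Tendsto (fun μ : ℝ => ENNReal.ofReal ((1-t)⁻¹ * (realBeta (2*μ) (2*(1-μ)))⁻¹))
      (nhdsWithin 1 (Ioo (0:ℝ) 1)) (nhds 0) := by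
    have h := realBetaInv_tendsto_zero_at1.const_mul (1-t)⁻¹
    rw [mul_zero] at h
    have := (ENNReal.continuous_ofReal.tendsto 0).comp h
    simpa [Function.comp_def] using this
  apply tendsto_of_tendsto_of_tendsto_of_le_of_le' tendsto_const_nhds hup
  · exact Filter.Eventually.of_forall (fun μ => zero_le)
  · have hhalf : ∀ᶠ μ : ℝ in nhdsWithin 1 (Ioo (0:ℝ) 1), (1:ℝ)/2 < μ :=
      Filter.Eventually.filter_mono nhdsWithin_le_nhds
        (Filter.Tendsto.eventually_const_lt (by norm_num) tendsto_id)
    filter_upwards [self_mem_nhdsWithin, hhalf] with μ hμ hμ2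
    set B := realBeta (2*μ) (2*(1-μ)) with hBdef
    have hB : 0 < B := realBeta_pos (by linarith [hμ.1]) (by linarith [hμ.2])
    set c : ℝ≥0∞ := ENNReal.ofReal ((1-t)⁻¹ * B⁻¹) with hc
    have ht1 : (0:ℝ) < 1 - t := by linarith [ht.2]
    rw [betaMeasure, withDensity_apply _ measurableSet_Iic]
    calc ∫⁻ u in Iic t, ENNReal.ofReal (betaDensity μ u) ∂volume
        ≤ ∫⁻ u in Iic t, (Ioc 0 t).indicator (fun _ => c) u ∂volume := by
          apply setLIntegral_mono (measurable_const.indicator measurableSet_Ioc)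
          intro u hu
          by_cases h1 : 0 < u
          · rw [indicator_of_mem (show u ∈ Ioc 0 t from ⟨h1, hu⟩)]
            apply ENNReal.ofReal_le_ofReal
            have hu1 : u < 1 := lt_of_le_of_lt hu ht.2
            rw [betaDensity, if_pos (And.intro h1 hu1), ← hBdef]
            rw [div_eq_mul_inv]
            apply mul_le_mul_of_nonneg_right _ (by positivity)
            have e1 : (1-u) ^ (1-2*μ) ≤ (1-t) ^ (1-2*μ) :=
              Real.rpow_le_rpow_of_nonpos ht1 (by have := mem_Iic.mp hu; linarith) (by linarith)
            have e2 : (1-t) ^ (1-2*μ) ≤ (1-t)⁻¹ := by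
              rw [← Real.rpow_neg_one (1-t)]
              exact Real.rpow_le_rpow_of_exponent_ge ht1 (by linarith [ht.1]) (by linarith [hμ.2])
            have e3 : u ^ (2*μ-1) ≤ 1 :=
              Real.rpow_le_one h1.le hu1.le (by linarith)
            calc u ^ (2*μ-1) * (1-u) ^ (1-2*μ)
                ≤ 1 * (1-u) ^ (1-2*μ) := by
                  apply mul_le_mul_of_nonneg_right e3 (Real.rpow_nonneg (by linarith) _)
              _ = (1-u) ^ (1-2*μ) := one_mul _
              _ ≤ (1-t) ^ (1-2*μ) := e1
              _ ≤ (1-t)⁻¹ := e2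
          · rw [betaDensity, if_neg (by push_neg; intro h; exact absurd h h1), ENNReal.ofReal_zero]
            exact zero_le
      _ ≤ ∫⁻ u, (Ioc 0 t).indicator (fun _ => c) u ∂volume := setLIntegral_le_lintegral _ _
      _ = c * volume (Ioc 0 t) := by
          rw [lintegral_indicator measurableSet_Ioc, setLIntegral_const]
      _ ≤ c * 1 := by
          apply mul_le_mul_right
          rw [Real.volume_Ioc]
          exact ENNReal.ofReal_le_one.mpr (by linarith [ht.2])
      _ = c := mul_one c

lemma betaMeasure_ae_Ioo {μ : ℝ} : ∀ᵐ u ∂betaMeasure μ, u ∈ Ioo (0:ℝ) 1 := by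
  rw [ae_iff]
  have : {u : ℝ | ¬ u ∈ Ioo (0:ℝ) 1} = (Ioo (0:ℝ) 1)ᶜ := rfl
  rw [this, betaMeasure, withDensity_apply _ measurableSet_Ioo.compl]
  rw [setLIntegral_congr_fun measurableSet_Ioo.compl (
    (fun u hu => by rw [betaDensity, if_neg (by simpa [mem_Ioo] using hu), ENNReal.ofReal_zero]))]
  simp

lemma integral_beta_tendsto_at0 (g : ℝ → ℝ) (hg : Continuous g) (C : ℝ) (hgC : ∀ u, |g u| ≤ C) :
    Tendsto (fun μ : ℝ => ∫ u, g u ∂betaMeasure μ) (nhdsWithin 0 (Ioo (0:ℝ) 1)) (nhds (g 0)) := by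
  have hC0 : 0 ≤ C := le_trans (abs_nonneg _) (hgC 0)
  rw [Metric.tendsto_nhds]
  intro ε hε
  obtain ⟨δ, hδ0, hδ⟩ := Metric.continuousAt_iff.mp hg.continuousAt (ε/2) (by linarith)
  set t : ℝ := min (δ/2) (1/2) with htdef
  have htI : t ∈ Ioo (0:ℝ) 1 := ⟨lt_min (by linarith) (by norm_num), lt_of_le_of_lt (min_le_right _ _) (by norm_num)⟩
  have htδ : t < δ := lt_of_le_of_lt (min_le_left _ _) (by linarith)
  have htail := (ENNReal.tendsto_toReal (by simp : (0:ℝ≥0∞) ≠ ⊤)).comp (betaMeasure_tail_at0 htI)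
  simp only [Function.comp_def, ENNReal.toReal_zero] at htail
  have hsmall := htail.eventually_lt_const (show (0:ℝ) < ε/(2*(2*C+1)) by positivity)
  filter_upwards [self_mem_nhdsWithin, hsmall] with μ hμ hτ
  haveI := betaMeasure_isProb hμ
  set β := betaMeasure μ with hβ
  have hgint : Integrable g β := by
    apply Integrable.mono' (integrable_const C) hg.aestronglyMeasurable
    exact Filter.Eventually.of_forall (fun u => by rw [Real.norm_eq_abs]; exact hgC u)
  have key : ∫ u, g u ∂β - g 0 = ∫ u, (g u - g 0) ∂β := by
    rw [integral_sub hgint (integrable_const _), integral_const, probReal_univ,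
      one_smul]
  set τ : ℝ := (β (Ici t)).toReal with hτdef
  have hτ0 : 0 ≤ τ := ENNReal.toReal_nonneg
  have hbd : Integrable (fun u => ε/2 + (Ici t).indicator (fun _ => 2*C) u) β :=
    (integrable_const _).add ((integrable_const (2*C)).indicator measurableSet_Ici)
  have habs : Integrable (fun u => |g u - g 0|) β := (hgint.sub (integrable_const _)).abs
  have hmono : ∫ u, |g u - g 0| ∂β ≤ ∫ u, (ε/2 + (Ici t).indicator (fun _ => 2*C) u) ∂β := by
    apply integral_mono_ae habs hbd
    filter_upwards [betaMeasure_ae_Ioo] with u hu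
    by_cases hut : u < t
    · have : dist u 0 < δ := by
        rw [Real.dist_eq, sub_zero, abs_of_pos hu.1]; linarith
      have := hδ this
      rw [Real.dist_eq] at this
      have hind : (0:ℝ) ≤ (Ici t).indicator (fun _ => 2*C) u := by
        apply indicator_nonneg; intro _ _; linarith
      linarith
    · push_neg at hut
      rw [indicator_of_mem (mem_Ici.mpr hut)]
      have h1 := hgC u
      have h2 := hgC 0
      have := abs_sub (g u) (g 0)
      calc |g u - g 0| ≤ |g u| + |g 0| := abs_sub _ _
        _ ≤ 2*C := by linarith
        _ ≤ ε/2 + 2*C := by linarith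
  have hval : ∫ u, (ε/2 + (Ici t).indicator (fun _ => 2*C) u) ∂β = ε/2 + τ * (2*C) := by
    rw [integral_add (integrable_const _) ((integrable_const (2*C)).indicator measurableSet_Ici),
      integral_const, probReal_univ, one_smul,
      integral_indicator_const _ measurableSet_Ici, smul_eq_mul]
    rfl
  rw [Real.dist_eq, key]
  have hle : |∫ u, (g u - g 0) ∂β| ≤ ∫ u, |g u - g 0| ∂β := by
    have := norm_integral_le_integral_norm (μ := β) (f := fun u => g u - g 0)
    simpa [Real.norm_eq_abs] using this
  have hfin : τ * (2*C) < ε/2 := by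
    have h1 : τ * (2*C) ≤ ε/(2*(2*C+1)) * (2*C) := mul_le_mul_of_nonneg_right hτ.le (by linarith)
    have h2 : ε/(2*(2*C+1)) * (2*C) < ε/2 := by
      rw [show ε/(2*(2*C+1)) * (2*C) = ε * (2*C) / (2*(2*C+1)) from by ring,
        div_lt_div_iff₀ (by positivity) (by norm_num : (0:ℝ) < 2)]
      nlinarith
    linarith
  calc |∫ u, (g u - g 0) ∂β| ≤ ∫ u, |g u - g 0| ∂β := hle
    _ ≤ ε/2 + τ * (2*C) := le_trans hmono (le_of_eq hval)
    _ < ε := by linarith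

lemma integral_beta_tendsto_at1 (g : ℝ → ℝ) (hg : Continuous g) (C : ℝ) (hgC : ∀ u, |g u| ≤ C) :
    Tendsto (fun μ : ℝ => ∫ u, g u ∂betaMeasure μ) (nhdsWithin 1 (Ioo (0:ℝ) 1)) (nhds (g 1)) := by
  have hC0 : 0 ≤ C := le_trans (abs_nonneg _) (hgC 0)
  rw [Metric.tendsto_nhds]
  intro ε hε
  obtain ⟨δ, hδ0, hδ⟩ := Metric.continuousAt_iff.mp hg.continuousAt (ε/2) (by linarith)
  set t : ℝ := min (δ/2) (1/2) with htdef
  have ht0 : 0 < t := lt_min (by linarith) (by norm_num)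
  have ht2 : t ≤ 1/2 := min_le_right _ _
  have htδ : t < δ := lt_of_le_of_lt (min_le_left _ _) (by linarith)
  have hsI : 1 - t ∈ Ioo (0:ℝ) 1 := ⟨by linarith, by linarith⟩
  have htail := (ENNReal.tendsto_toReal (by simp : (0:ℝ≥0∞) ≠ ⊤)).comp (betaMeasure_tail_at1 hsI)
  simp only [Function.comp_def, ENNReal.toReal_zero] at htail
  have hsmall := htail.eventually_lt_const (show (0:ℝ) < ε/(2*(2*C+1)) by positivity)
  filter_upwards [self_mem_nhdsWithin, hsmall] with μ hμ hτ
  haveI := betaMeasure_isProb hμ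
  set β := betaMeasure μ with hβ
  have hgint : Integrable g β := by
    apply Integrable.mono' (integrable_const C) hg.aestronglyMeasurable
    exact Filter.Eventually.of_forall (fun u => by rw [Real.norm_eq_abs]; exact hgC u)
  have key : ∫ u, g u ∂β - g 1 = ∫ u, (g u - g 1) ∂β := by
    rw [integral_sub hgint (integrable_const _), integral_const, probReal_univ,
      one_smul]
  set τ : ℝ := (β (Iic (1-t))).toReal with hτdef
  have hτ0 : 0 ≤ τ := ENNReal.toReal_nonneg
  have hbd : Integrable (fun u => ε/2 + (Iic (1-t)).indicator (fun _ => 2*C) u) β :=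
    (integrable_const _).add ((integrable_const (2*C)).indicator measurableSet_Iic)
  have habs : Integrable (fun u => |g u - g 1|) β := (hgint.sub (integrable_const _)).abs
  have hmono : ∫ u, |g u - g 1| ∂β ≤ ∫ u, (ε/2 + (Iic (1-t)).indicator (fun _ => 2*C) u) ∂β := by
    apply integral_mono_ae habs hbd
    filter_upwards [betaMeasure_ae_Ioo] with u hu
    by_cases hut : 1 - t < u
    · have : dist u 1 < δ := by
        rw [Real.dist_eq, abs_of_nonpos (by linarith [hu.2] : u - 1 ≤ 0)]
        linarith
      have := hδ this
      rw [Real.dist_eq] at this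
      have hind : (0:ℝ) ≤ (Iic (1-t)).indicator (fun _ => 2*C) u := by
        apply indicator_nonneg; intro _ _; linarith
      linarith
    · push_neg at hut
      rw [indicator_of_mem (mem_Iic.mpr hut)]
      have h1 := hgC u
      have h2 := hgC 1
      calc |g u - g 1| ≤ |g u| + |g 1| := abs_sub _ _
        _ ≤ 2*C := by linarith
        _ ≤ ε/2 + 2*C := by linarith
  have hval : ∫ u, (ε/2 + (Iic (1-t)).indicator (fun _ => 2*C) u) ∂β = ε/2 + τ * (2*C) := by
    rw [integral_add (integrable_const _) ((integrable_const (2*C)).indicator measurableSet_Iic),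
      integral_const, probReal_univ, one_smul,
      integral_indicator_const _ measurableSet_Iic, smul_eq_mul]
    rfl
  rw [Real.dist_eq, key]
  have hle : |∫ u, (g u - g 1) ∂β| ≤ ∫ u, |g u - g 1| ∂β := by
    have := norm_integral_le_integral_norm (μ := β) (f := fun u => g u - g 1)
    simpa [Real.norm_eq_abs] using this
  have hfin : τ * (2*C) < ε/2 := by
    have h1 : τ * (2*C) ≤ ε/(2*(2*C+1)) * (2*C) := mul_le_mul_of_nonneg_right hτ.le (by linarith)
    have h2 : ε/(2*(2*C+1)) * (2*C) < ε/2 := by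
      rw [show ε/(2*(2*C+1)) * (2*C) = ε * (2*C) / (2*(2*C+1)) from by ring,
        div_lt_div_iff₀ (by positivity) (by norm_num : (0:ℝ) < 2)]
      nlinarith
    linarith
  calc |∫ u, (g u - g 1) ∂β| ≤ ∫ u, |g u - g 1| ∂β := hle
    _ ≤ ε/2 + τ * (2*C) := le_trans hmono (le_of_eq hval)
    _ < ε := by linarith


lemma PGN_integral_eq {μ k : ℝ} (hμ : μ ∈ Ioo (0:ℝ) 1) (hk : 0 < k)
    (f : BoundedContinuousFunction ℝ ℝ) :
    ∫ x, f x ∂PGN μ k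
      = ∫ v, (∫ u, f (Real.sqrt v * Real.cos (π * u)) ∂betaMeasure μ) ∂chiSqMeasure k := by
  haveI := chiSqMeasure_isProb k hk
  haveI := betaMeasure_isProb hμ
  have hT : Continuous (fun p : ℝ × ℝ => Real.sqrt p.1 * Real.cos (π * p.2)) := by fun_prop
  rw [PGN, integral_map hT.measurable.aemeasurable f.continuous.aestronglyMeasurable]
  exact integral_prod _ ((f.compContinuous ⟨_, hT⟩).integrable _)

theorem stmt7 (k : ℝ) (hk : 0 < k) :
    (∀ f : BoundedContinuousFunction ℝ ℝ,
      Filter.Tendsto (fun μ : ℝ => ∫ x, f x ∂(PGN μ k))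
        (nhdsWithin 0 (Set.Ioo (0:ℝ) 1))
        (nhds (∫ x, f x ∂(chiMeasure k)))) ∧
    (∀ f : BoundedContinuousFunction ℝ ℝ,
      Filter.Tendsto (fun μ : ℝ => ∫ x, f x ∂(PGN μ k))
        (nhdsWithin 1 (Set.Ioo (0:ℝ) 1))
        (nhds (∫ x, f x ∂(Measure.map (fun x : ℝ => -x) (chiMeasure k))))) := by
  haveI := chiSqMeasure_isProb k hk
  constructor
  · intro f
    rw [integral_chiMeasure k hk f]
    have main : Tendsto
        (fun μ : ℝ => ∫ v, (∫ u, f (Real.sqrt v * Real.cos (π * u)) ∂betaMeasure μ) ∂chiSqMeasure k)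
        (nhdsWithin 0 (Ioo (0:ℝ) 1)) (nhds (∫ v, f (Real.sqrt v) ∂chiSqMeasure k)) := by
      apply tendsto_integral_filter_of_dominated_convergence (fun _ => ‖f‖)
      · filter_upwards [self_mem_nhdsWithin] with μ hμ
        haveI := betaMeasure_isProb hμ
        exact (StronglyMeasurable.integral_prod_right'
          (f := fun p : ℝ × ℝ => f (Real.sqrt p.1 * Real.cos (π * p.2)))
          ((f.continuous.comp (by fun_prop)).stronglyMeasurable)).aestronglyMeasurable
      · filter_upwards [self_mem_nhdsWithin] with μ hμ
        haveI := betaMeasure_isProb hμ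
        apply Filter.Eventually.of_forall; intro v
        calc ‖∫ u, f (Real.sqrt v * Real.cos (π * u)) ∂betaMeasure μ‖
            ≤ ‖f‖ * (betaMeasure μ univ).toReal :=
              norm_integral_le_of_norm_le_const
                (Filter.Eventually.of_forall (fun u => f.norm_coe_le_norm _))
          _ = ‖f‖ := by rw [measure_univ]; simp
      · exact integrable_const _
      · apply Filter.Eventually.of_forall; intro v
        have := integral_beta_tendsto_at0 (fun u => f (Real.sqrt v * Real.cos (π * u)))
          (f.continuous.comp (by fun_prop)) ‖f‖
          (fun u => by rw [← Real.norm_eq_abs]; exact f.norm_coe_le_norm _)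
        simpa using this
    exact main.congr' (by
      filter_upwards [self_mem_nhdsWithin] with μ hμ using (PGN_integral_eq hμ hk f).symm)
  · intro f
    rw [integral_map measurable_neg.aemeasurable f.continuous.aestronglyMeasurable,
      integral_chiMeasure k hk (fun x => f (-x))]
    have main : Tendsto
        (fun μ : ℝ => ∫ v, (∫ u, f (Real.sqrt v * Real.cos (π * u)) ∂betaMeasure μ) ∂chiSqMeasure k)
        (nhdsWithin 1 (Ioo (0:ℝ) 1)) (nhds (∫ v, f (-Real.sqrt v) ∂chiSqMeasure k)) := by
      apply tendsto_integral_filter_of_dominated_convergence (fun _ => ‖f‖)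
      · filter_upwards [self_mem_nhdsWithin] with μ hμ
        haveI := betaMeasure_isProb hμ
        exact (StronglyMeasurable.integral_prod_right'
          (f := fun p : ℝ × ℝ => f (Real.sqrt p.1 * Real.cos (π * p.2)))
          ((f.continuous.comp (by fun_prop)).stronglyMeasurable)).aestronglyMeasurable
      · filter_upwards [self_mem_nhdsWithin] with μ hμ
        haveI := betaMeasure_isProb hμ
        apply Filter.Eventually.of_forall; intro v
        calc ‖∫ u, f (Real.sqrt v * Real.cos (π * u)) ∂betaMeasure μ‖
            ≤ ‖f‖ * (betaMeasure μ univ).toReal :=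
              norm_integral_le_of_norm_le_const
                (Filter.Eventually.of_forall (fun u => f.norm_coe_le_norm _))
          _ = ‖f‖ := by rw [measure_univ]; simp
      · exact integrable_const _
      · apply Filter.Eventually.of_forall; intro v
        have := integral_beta_tendsto_at1 (fun u => f (Real.sqrt v * Real.cos (π * u)))
          (f.continuous.comp (by fun_prop)) ‖f‖
          (fun u => by rw [← Real.norm_eq_abs]; exact f.norm_coe_le_norm _)
        simpa [Real.cos_pi] using this
    exact main.congr' (by
      filter_upwards [self_mem_nhdsWithin] with μ hμ using (PGN_integral_eq hμ hk f).symm)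
end
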